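/- In the pre-extension setting, the obstruction components ξ(x,y,z) = f(y,z) − f(x+y,z) + f(x,y+z) − f(x,y) and η(x,y) = f(x,y) − f(y,x) belong to the bicenter K_A for all x, y, z ∈ R, i.e. they multiply every element of A to zero on both sides. -/
import Mathlib


variable {R A : Type*}

/-- The bicenter `K_A = {c ∈ A : c·a = 0 = a·c for all a}`. -/
def bicenter (A : Type*) [NonUnitalRing A] : Set A :=
  {c | ∀ b : A, c * b = 0 ∧ b * c = 0}

/-- A pre-extension datum `(φ, ψ, f, g)` of the ring `A` by the ring `R`:
`φ_x, ψ_x ∈ End_ℤ(A)` and `f, g : R² → A` satisfying the relations (10) and the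
defining relations of the factor sets. -/
def IsPreExtension [Ring R] [NonUnitalRing A]
    (φ ψ : R → AddMonoid.End A) (f g : R → R → A) : Prop :=
  (∀ a : A, φ 1 a = a) ∧
  (∀ a : A, ψ 1 a = a) ∧
  (∀ (x : R) (a b : A), a * φ x b = ψ x a * b) ∧
  (∀ (x : R) (a b : A), φ x (a * b) = φ x a * b) ∧
  (∀ (x : R) (a b : A), ψ x (b * a) = b * ψ x a) ∧
  (∀ (x : R) (a b : A), ψ x b * a = b * φ x a) ∧
  (∀ (x y : R) (a : A), φ x (ψ y a) = ψ y (φ x a)) ∧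
  (∀ (x y : R) (a : A), φ x (φ y a) = φ (x * y) a + g x y * a) ∧
  (∀ (x y : R) (a : A), ψ y (ψ x a) = ψ (x * y) a + a * g x y) ∧
  (∀ (x y : R) (a : A), φ x a + φ y a = φ (x + y) a + f x y * a) ∧
  (∀ (x y : R) (a : A), ψ x a + ψ y a = ψ (x + y) a + a * f x y)

variable [Ring R] [NonUnitalRing A]

/-- The obstruction component `ξ`. -/
def xiObs (f : R → R → A) (x y z : R) : A :=
  f y z - f (x + y) z + f x (y + z) - f x y

/-- The obstruction component `η`. -/
def etaObs (f : R → R → A) (x y : R) : A :=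
  f x y - f y x

/-- The obstruction component `α`. -/
def alphaObs (φ ψ : R → AddMonoid.End A) (g : R → R → A) (x y z : R) : A :=
  φ x (g y z) - g (x * y) z + g x (y * z) - ψ z (g x y)

/-- The obstruction component `λ`. -/
def lambdaObs (φ : R → AddMonoid.End A) (f g : R → R → A) (x y z : R) : A :=
  φ x (f y z) - f (x * y) (x * z) + g x (y + z) - g x y - g x z

/-- The obstruction component `ρ`. -/
def rhoObs (ψ : R → AddMonoid.End A) (f g : R → R → A) (x y z : R) : A :=
  ψ z (f x y) - f (x * z) (y * z) + g (x + y) z - g x z - g y z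

/-- The obstruction components
`ξ(x,y,z) = f(y,z) − f(x+y,z) + f(x,y+z) − f(x,y)` and `η(x,y) = f(x,y) − f(y,x)`
lie in the bicenter. -/
theorem xi_eta_mem_bicenter
    [Nontrivial R] (φ ψ : R → AddMonoid.End A) (f g : R → R → A)
    (h : IsPreExtension φ ψ f g) :
    ∀ x y z : R, xiObs f x y z ∈ bicenter A ∧ etaObs f x y ∈ bicenter A := by
  obtain ⟨-, -, -, -, -, -, -, -, -, h10, h11⟩ := h
  have hf : ∀ (x y : R) (a : A), f x y * a = φ x a + φ y a - φ (x + y) a := by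
    intro x y a
    rw [eq_sub_iff_add_eq, add_comm]
    exact (h10 x y a).symm
  have hg : ∀ (x y : R) (a : A), a * f x y = ψ x a + ψ y a - ψ (x + y) a := by
    intro x y a
    rw [eq_sub_iff_add_eq, add_comm]
    exact (h11 x y a).symm
  intro x y z
  refine ⟨fun b => ⟨?_, ?_⟩, fun b => ⟨?_, ?_⟩⟩
  · simp only [xiObs, sub_mul, add_mul, hf, ← add_assoc]
    abel
  · simp only [xiObs, mul_sub, mul_add, hg, ← add_assoc]
    abel
  · simp only [etaObs, sub_mul, hf, add_comm x y]
    abel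
  · simp only [etaObs, mul_sub, hg, add_comm x y]
    abel
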